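/- For every integer τ ≥ 1, the weighted sum of inverse square roots satisfies the lower bound Σ_{i=1}^{τ} α_τ^i / √i ≥ 1/√τ. -/

import Mathlib

open Finset

/-- The learning rate `α_τ = (H+1)/(H+τ)`. -/
noncomputable def lr (H : ℝ) (τ : ℕ) : ℝ := (H + 1) / (H + τ)

/-- The coefficients `α_τ^i`: `α_τ^0 = ∏_{j=1}^{τ}(1-α_j)` and, for `1 ≤ i ≤ τ`,
`α_τ^i = α_i ∏_{j=i+1}^{τ}(1-α_j)` (empty products equal 1). -/
noncomputable def acoef (H : ℝ) (τ i : ℕ) : ℝ :=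
  if i = 0 then ∏ j ∈ Finset.Icc 1 τ, (1 - lr H j)
  else lr H i * ∏ j ∈ Finset.Icc (i + 1) τ, (1 - lr H j)

lemma lr_nonneg (H : ℝ) (hH : 1 ≤ H) (i : ℕ) : 0 ≤ lr H i := by
  unfold lr
  apply div_nonneg <;> positivity

lemma lr_le_one (H : ℝ) (hH : 1 ≤ H) (i : ℕ) (hi : 1 ≤ i) : lr H i ≤ 1 := by
  unfold lr
  rw [div_le_one (by positivity)]
  have : (1:ℝ) ≤ (i:ℝ) := by exact_mod_cast hi
  linarith

lemma acoef_nonneg (H : ℝ) (hH : 1 ≤ H) (τ i : ℕ) (hi : 1 ≤ i) : 0 ≤ acoef H τ i := by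
  unfold acoef
  rw [if_neg (by omega)]
  apply mul_nonneg (lr_nonneg H hH i)
  apply Finset.prod_nonneg
  intro j hj
  have := lr_le_one H hH j (by simp at hj; omega)
  linarith

lemma sum_acoef (H : ℝ) (hH : 1 ≤ H) (τ : ℕ) (hτ : 1 ≤ τ) :
    ∑ i ∈ Finset.Icc 1 τ, acoef H τ i = 1 := by
  induction τ, hτ using Nat.le_induction with
  | base =>
    simp [acoef, lr]
    field_simp
    intro h; linarith
  | succ n hn ih =>
    rw [Finset.sum_Icc_succ_top (by omega)]
    have key : ∀ i ∈ Finset.Icc 1 n, acoef H (n+1) i = (1 - lr H (n+1)) * acoef H n i := by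
      intro i hi
      simp only [Finset.mem_Icc] at hi
      unfold acoef
      rw [if_neg (by omega), if_neg (by omega)]
      rw [Finset.prod_Icc_succ_top (by omega)]
      ring
    rw [Finset.sum_congr rfl key, ← Finset.mul_sum, ih]
    have : acoef H (n+1) (n+1) = lr H (n+1) := by
      unfold acoef
      rw [if_neg (by omega)]
      simp
    rw [this]
    ring

theorem stmt_0 (H : ℝ) (hH : 1 ≤ H) (τ : ℕ) (hτ : 1 ≤ τ) :
    1 / Real.sqrt τ ≤ ∑ i ∈ Finset.Icc 1 τ, acoef H τ i / Real.sqrt i := by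
  have h1 : (1:ℝ) / Real.sqrt τ = ∑ i ∈ Finset.Icc 1 τ, acoef H τ i / Real.sqrt τ := by
    rw [← Finset.sum_div, sum_acoef H hH τ hτ]
  rw [h1]
  apply Finset.sum_le_sum
  intro i hi
  simp only [Finset.mem_Icc] at hi
  apply div_le_div_of_nonneg_left (acoef_nonneg H hH τ i hi.1)
  · exact Real.sqrt_pos.mpr (by exact_mod_cast Nat.lt_of_lt_of_le Nat.zero_lt_one hi.1)
  · exact Real.sqrt_le_sqrt (by exact_mod_cast hi.2)
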